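/- Let φ_1, …, φ_m ∈ ℝ^d, let λ_1, …, λ_m ≥ 0, and let ξ > 0. Let Φ_λ be the m×d matrix whose i-th row is √λ_i·φ_iᵀ, let K_λ := Φ_λΦ_λᵀ (so (K_λ)_{ij} = √(λ_iλ_j)·φ_iᵀφ_j), and for u ∈ ℝ^d let k_λ(u) := Φ_λ·u. Then for all indices i, j: ‖φ_i − φ_j‖²_{(ξ·I_d + Φ_λᵀΦ_λ)⁻¹} = ξ⁻¹·( (φ_iᵀφ_i + φ_jᵀφ_j − 2·φ_iᵀφ_j) − ‖k_λ(φ_i) − k_λ(φ_j)‖²_{(ξ·I_m + K_λ)⁻¹} ). -/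

import Mathlib

open Matrix

lemma smul_one_posDef {n : ℕ} {ξ : ℝ} (hξ : 0 < ξ) :
    (ξ • (1 : Matrix (Fin n) (Fin n) ℝ)).PosDef := by
  exact Matrix.PosDef.one.smul hξ

/-- Kernelized form of the RKHS quadratic form: with `Φ_λ` the matrix whose `i`-th row is
`√λ_i·φ_iᵀ`, `K_λ = Φ_λΦ_λᵀ`, and `k_λ(u) = Φ_λu`, one has
`‖φ_i − φ_j‖²_{(ξI_d + Φ_λᵀΦ_λ)⁻¹}
  = ξ⁻¹((φ_iᵀφ_i + φ_jᵀφ_j − 2φ_iᵀφ_j) − ‖k_λ(φ_i) − k_λ(φ_j)‖²_{(ξI_m + K_λ)⁻¹})`. -/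
theorem kernelized_condition_identity {d m : ℕ}
    (φ : Fin m → Fin d → ℝ) (lam : Fin m → ℝ) (hlam : ∀ i, 0 ≤ lam i)
    (ξ : ℝ) (hξ : 0 < ξ)
    (Philam : Matrix (Fin m) (Fin d) ℝ)
    (hPhilam : ∀ i j, Philam i j = Real.sqrt (lam i) * φ i j)
    (Klam : Matrix (Fin m) (Fin m) ℝ) (hKlam : Klam = Philam * Philamᵀ)
    (klam : (Fin d → ℝ) → Fin m → ℝ) (hklam : ∀ u, klam u = Philam *ᵥ u) :
    ∀ i j : Fin m,
      (φ i - φ j) ⬝ᵥ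
          ((ξ • (1 : Matrix (Fin d) (Fin d) ℝ) + Philamᵀ * Philam)⁻¹ *ᵥ (φ i - φ j)) =
        ξ⁻¹ * ((φ i ⬝ᵥ φ i + φ j ⬝ᵥ φ j - 2 * (φ i ⬝ᵥ φ j)) -
          (klam (φ i) - klam (φ j)) ⬝ᵥ
            ((ξ • (1 : Matrix (Fin m) (Fin m) ℝ) + Klam)⁻¹ *ᵥ
              (klam (φ i) - klam (φ j)))) := by
  intro i j
  set Φ := Philam
  set A := ξ • (1 : Matrix (Fin d) (Fin d) ℝ) + Φᵀ * Φ with hA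
  set B := ξ • (1 : Matrix (Fin m) (Fin m) ℝ) + Φ * Φᵀ with hB
  -- positive definiteness and invertibility
  have hPSA : (Φᵀ * Φ).PosSemidef := by
    have := Matrix.posSemidef_conjTranspose_mul_self Φ
    rwa [Matrix.conjTranspose_eq_transpose_of_trivial] at this
  have hPSB : (Φ * Φᵀ).PosSemidef := by
    have := Matrix.posSemidef_self_mul_conjTranspose Φ
    rwa [Matrix.conjTranspose_eq_transpose_of_trivial] at this
  have hApd : A.PosDef := (smul_one_posDef hξ).add_posSemidef hPSA
  have hBpd : B.PosDef := (smul_one_posDef hξ).add_posSemidef hPSB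
  have hAu : IsUnit A := hApd.isUnit
  have hBu : IsUnit B := hBpd.isUnit
  have hAinv : A⁻¹ * A = 1 := Matrix.nonsing_inv_mul _ ((Matrix.isUnit_iff_isUnit_det _).mp hAu)
  have hBinv : B⁻¹ * B = 1 := Matrix.nonsing_inv_mul _ ((Matrix.isUnit_iff_isUnit_det _).mp hBu)
  have hBinv' : B * B⁻¹ = 1 := Matrix.mul_nonsing_inv _ ((Matrix.isUnit_iff_isUnit_det _).mp hBu)
  -- intertwining: Φ * A = B * Φ
  have hint : Φ * A = B * Φ := by
    rw [hA, hB]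
    simp [Matrix.mul_add, Matrix.add_mul, Matrix.mul_smul, Matrix.smul_mul, Matrix.mul_assoc]
  have hswap : Φ * A⁻¹ = B⁻¹ * Φ := by
    have h1 : B⁻¹ * (Φ * A) * A⁻¹ = B⁻¹ * (B * Φ) * A⁻¹ := by rw [hint]
    calc Φ * A⁻¹ = B⁻¹ * (B * Φ) * A⁻¹ := by
          rw [← Matrix.mul_assoc, hBinv, Matrix.one_mul]
      _ = B⁻¹ * (Φ * A) * A⁻¹ := by rw [hint]
      _ = B⁻¹ * Φ * (A * A⁻¹) := by
          simp [Matrix.mul_assoc]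
      _ = B⁻¹ * Φ := by
          rw [Matrix.mul_nonsing_inv _ ((Matrix.isUnit_iff_isUnit_det _).mp hAu), Matrix.mul_one]
  have hswap' : A⁻¹ * Φᵀ = Φᵀ * B⁻¹ := by
    have hAT : Aᵀ = A := by
      rw [hA]; simp [Matrix.transpose_add, Matrix.transpose_smul, Matrix.transpose_mul]
    have hBT : Bᵀ = B := by
      rw [hB]; simp [Matrix.transpose_add, Matrix.transpose_smul, Matrix.transpose_mul]
    have hAsymm : A⁻¹ᵀ = A⁻¹ := by rw [Matrix.transpose_nonsing_inv, hAT]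
    have hBsymm : B⁻¹ᵀ = B⁻¹ := by rw [Matrix.transpose_nonsing_inv, hBT]
    have := congrArg Matrix.transpose hswap
    simpa [Matrix.transpose_mul, hAsymm, hBsymm] using this
  -- key identity: ξ • A⁻¹ = 1 - Φᵀ * B⁻¹ * Φ
  have hkey : ξ • A⁻¹ = 1 - Φᵀ * B⁻¹ * Φ := by
    have h1 : A⁻¹ * (ξ • (1 : Matrix (Fin d) (Fin d) ℝ)) = A⁻¹ * A - A⁻¹ * (Φᵀ * Φ) := by
      rw [hA, Matrix.mul_add]
      abel
    calc ξ • A⁻¹ = A⁻¹ * (ξ • (1 : Matrix (Fin d) (Fin d) ℝ)) := by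
          rw [Matrix.mul_smul, Matrix.mul_one]
      _ = A⁻¹ * A - A⁻¹ * (Φᵀ * Φ) := h1
      _ = 1 - Φᵀ * B⁻¹ * Φ := by
          rw [hAinv, ← Matrix.mul_assoc, hswap']
  have hAinvEq : A⁻¹ = ξ⁻¹ • (1 - Φᵀ * B⁻¹ * Φ) := by
    rw [← hkey, smul_smul, inv_mul_cancel₀ hξ.ne', one_smul]
  -- now compute
  set u : Fin d → ℝ := φ i - φ j with hu
  have hk : klam (φ i) - klam (φ j) = Φ *ᵥ u := by
    rw [hklam, hklam, hu, Matrix.mulVec_sub]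
  rw [hKlam, hk, ← hB, hAinvEq]
  have expand : u ⬝ᵥ ((ξ⁻¹ • (1 - Φᵀ * B⁻¹ * Φ)) *ᵥ u)
      = ξ⁻¹ * (u ⬝ᵥ u - (Φ *ᵥ u) ⬝ᵥ (B⁻¹ *ᵥ (Φ *ᵥ u))) := by
    rw [Matrix.smul_mulVec, dotProduct_smul, smul_eq_mul]
    congr 1
    rw [Matrix.sub_mulVec, dotProduct_sub, Matrix.one_mulVec]
    congr 1
    rw [← Matrix.mulVec_mulVec, ← Matrix.mulVec_mulVec, Matrix.dotProduct_mulVec u Φᵀ,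
      Matrix.vecMul_transpose, Matrix.dotProduct_mulVec]
  rw [expand]
  congr 2
  rw [hu]
  simp [dotProduct_sub, sub_dotProduct]
  rw [dotProduct_comm (φ j) (φ i)]
  ring
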